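/- arXiv:1001.3130 — 2 statements merged into one kernel-verified Lean document; each statement's English description precedes it below -/
import Mathlib

section
/- Let Y be a real-valued stochastic process and t ∈ ℝ. Suppose Y(t+r) − Y(t) is symmetrically distributed for every r, and there exist ε₀ > 0 and h(t) > 0 such that M := sup over r ∈ (0, ε₀) of ∫₀^∞ |φ_{(Y(t+r)−Y(t))/r^{h(t)}}(v)| dv < ∞, where φ_Z denotes the characteristic function of Z. Then there exists K > 0 (depending only on t and ε₀) such that for all x > 0 and all r ∈ (0, ε₀), P(|Y(t+r) − Y(t)| < x) ≤ K · x / r^{h(t)}. -/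
open MeasureTheory Set

/-- The characteristic function of a real random variable `Z` under measure `μ`. -/
noncomputable def charFn {Ω : Type*} [MeasurableSpace Ω] (μ : Measure Ω) (Z : Ω → ℝ) (v : ℝ) : ℂ :=
  ∫ ω, Complex.exp (((v * Z ω : ℝ) : ℂ) * Complex.I) ∂μ

lemma aux_int (a w : ℝ) (hw : w ≠ 0) :
    ∫ v in (0:ℝ)..a, (a - v) * Real.cos (v * w) = (1 - Real.cos (a * w)) / w ^ 2 := by
  have hder : ∀ v ∈ Set.uIcc (0:ℝ) a,
      HasDerivAt (fun v => (a - v) * Real.sin (v * w) / w - Real.cos (v * w) / w ^ 2)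
        ((a - v) * Real.cos (v * w)) v := by
    intro v _
    have h1 : HasDerivAt (fun v : ℝ => v * w) w v := hasDerivAt_mul_const w
    have hsin : HasDerivAt (fun v : ℝ => Real.sin (v * w)) (Real.cos (v * w) * w) v := h1.sin
    have hcos : HasDerivAt (fun v : ℝ => Real.cos (v * w)) (-Real.sin (v * w) * w) v := h1.cos
    have hc : HasDerivAt (fun v : ℝ => a - v) (-1) v := (hasDerivAt_id v).const_sub a
    have h2 := ((hc.mul hsin).div_const w).sub (hcos.div_const (w ^ 2))
    convert h2 using 1 <;> try rfl
    field_simp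
    ring
  rw [intervalIntegral.integral_eq_sub_of_hasDerivAt hder
    (Continuous.intervalIntegrable (by continuity) 0 a)]
  simp
  field_simp
  ring

lemma key {Ω : Type*} [MeasurableSpace Ω] (μ : Measure Ω) [IsProbabilityMeasure μ]
    (W : Ω → ℝ) (hW : Measurable W) (M₁ b : ℝ) (hM₁ : 0 ≤ M₁) (hb : 0 < b)
    (hint : ∫⁻ v in Ioi (0:ℝ), ENNReal.ofReal ‖charFn μ W v‖ ≤ ENNReal.ofReal M₁) :
    (μ {ω | |W ω| < b}).toReal ≤ 4 * M₁ * b := by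
  set a : ℝ := b⁻¹ with ha_def
  have ha : 0 < a := inv_pos.mpr hb
  have hab : a * b = 1 := inv_mul_cancel₀ hb.ne'
  set S : Set Ω := {ω | |W ω| < b} with hS_def
  have hS : MeasurableSet S := measurableSet_lt hW.abs measurable_const
  set G : ℝ → ℝ := fun w => ∫ v in Ioc (0:ℝ) a, (a - v) * Real.cos (v * w) with hG_def
  have hGint : ∀ w, G w = ∫ v in (0:ℝ)..a, (a - v) * Real.cos (v * w) := fun w =>
    (intervalIntegral.integral_of_le ha.le).symm
  have hGform : ∀ w : ℝ, w ≠ 0 → G w = (1 - Real.cos (a * w)) / w ^ 2 := fun w hw => by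
    rw [hGint, aux_int a w hw]
  have hG0 : G 0 = a ^ 2 / 2 := by
    rw [hGint]
    simp only [Real.cos_zero, mul_zero, mul_one]
    rw [intervalIntegral.integral_sub intervalIntegrable_const intervalIntegral.intervalIntegrable_id,
      intervalIntegral.integral_const, integral_id]
    simp [smul_eq_mul]
    ring
  have hGnn : ∀ w, 0 ≤ G w := by
    intro w
    by_cases hw : w = 0
    · rw [hw, hG0]; positivity
    · rw [hGform w hw]
      have := Real.cos_le_one (a * w)
      have hw2 : (0:ℝ) < w ^ 2 := by positivity
      apply div_nonneg <;> nlinarith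
  have hGlow : ∀ w, |w| < b → a ^ 2 / 4 ≤ G w := by
    intro w hwb
    by_cases hw : w = 0
    · rw [hw, hG0]; nlinarith
    · rw [hGform w hw]
      have hw2 : (0:ℝ) < w ^ 2 := by positivity
      rw [le_div_iff₀ hw2]
      have hu : |a * w| ≤ 1 := by
        rw [abs_mul, abs_of_pos ha]
        nlinarith [abs_nonneg w]
      have hcb := Real.cos_bound hu
      have h4 : |a * w| ^ 4 ≤ (a * w) ^ 2 := by
        have h0 := pow_le_pow_of_le_one (abs_nonneg (a * w)) hu (by norm_num : 2 ≤ 4)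
        rwa [sq_abs] at h0
      have h5 := (abs_le.mp hcb).2
      nlinarith [sq_nonneg (a * w)]
  -- measurability of G
  have hGmeas : StronglyMeasurable G := by
    apply StronglyMeasurable.integral_prod_right'
      (f := fun p : ℝ × ℝ => (a - p.2) * Real.cos (p.2 * p.1))
    exact ((measurable_const.sub measurable_snd).mul
      (measurable_snd.mul measurable_fst).cos).stronglyMeasurable
  have hGbd : ∀ w, ‖G w‖ ≤ a * a := by
    intro w
    rw [hGint]
    refine le_trans (intervalIntegral.norm_integral_le_of_norm_le_const (C := a) ?_) ?_
    · intro v hv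
      rw [uIoc_of_le ha.le] at hv
      have h1 : |a - v| ≤ a := by rw [abs_of_nonneg (by linarith [hv.2])]; linarith [hv.1]
      calc ‖(a - v) * Real.cos (v * w)‖ = |a - v| * |Real.cos (v * w)| := abs_mul _ _
        _ ≤ a * 1 := mul_le_mul h1 (Real.abs_cos_le_one _) (abs_nonneg _) ha.le
        _ = a := mul_one a
    · rw [sub_zero, abs_of_pos ha]
  have hGWint : Integrable (fun ω => G (W ω)) μ :=
    (integrable_const (a * a)).mono' (hGmeas.comp_measurable hW).aestronglyMeasurable
      (ae_of_all _ fun ω => hGbd (W ω))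
  -- lower bound
  have hlow : a ^ 2 / 4 * (μ S).toReal ≤ ∫ ω, G (W ω) ∂μ := by
    have hind : ∫ ω, S.indicator (fun _ => a ^ 2 / 4) ω ∂μ = a ^ 2 / 4 * (μ S).toReal := by
      rw [integral_indicator_const _ hS, smul_eq_mul, mul_comm, measureReal_def]
    rw [← hind]
    refine integral_mono ((integrable_const _).indicator hS) hGWint fun ω => ?_
    by_cases hω : ω ∈ S
    · rw [indicator_of_mem hω]; exact hGlow _ hω
    · rw [indicator_of_notMem hω]; exact hGnn _
  -- Fubini
  set ν : Measure ℝ := volume.restrict (Ioc (0:ℝ) a) with hν_def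
  haveI : IsFiniteMeasure ν := by
    constructor
    rw [hν_def, Measure.restrict_apply_univ, Real.volume_Ioc]
    exact ENNReal.ofReal_lt_top
  have hprod_ae : ∀ᵐ p : Ω × ℝ ∂(μ.prod ν), p.2 ∈ Ioc (0:ℝ) a := by
    have : μ.prod ν = (μ.prod volume).restrict (univ ×ˢ Ioc (0:ℝ) a) := by
      rw [hν_def, ← Measure.prod_restrict, Measure.restrict_univ]
    rw [this]
    filter_upwards [ae_restrict_mem (MeasurableSet.univ.prod measurableSet_Ioc)] with p hp
    exact hp.2
  have hfint : Integrable (Function.uncurry fun (ω : Ω) (v : ℝ) =>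
      (a - v) * Real.cos (v * W ω)) (μ.prod ν) := by
    have hm : Measurable (Function.uncurry fun (ω : Ω) (v : ℝ) =>
        (a - v) * Real.cos (v * W ω)) :=
      (measurable_const.sub measurable_snd).mul
        ((measurable_snd.mul (hW.comp measurable_fst)).cos)
    refine (integrable_const a).mono' hm.aestronglyMeasurable ?_
    filter_upwards [hprod_ae] with p hp
    have h1 : |a - p.2| ≤ a := by rw [abs_of_nonneg (by linarith [hp.2])]; linarith [hp.1]
    calc ‖(a - p.2) * Real.cos (p.2 * W p.1)‖ = |a - p.2| * |Real.cos (p.2 * W p.1)| :=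
        abs_mul _ _
      _ ≤ a * 1 := mul_le_mul h1 (Real.abs_cos_le_one _) (abs_nonneg _) ha.le
      _ = a := mul_one a
  have hswap : ∫ ω, G (W ω) ∂μ = ∫ v, (∫ ω, (a - v) * Real.cos (v * W ω) ∂μ) ∂ν :=
    integral_integral_swap hfint
  -- characteristic function facts
  have hφmeas : StronglyMeasurable (fun v => charFn μ W v) := by
    apply StronglyMeasurable.integral_prod_right'
      (f := fun p : ℝ × Ω => Complex.exp ((↑(p.1 * W p.2) : ℂ) * Complex.I))
    exact (((Complex.measurable_ofReal.comp
      (measurable_fst.mul (hW.comp measurable_snd))).mul measurable_const).cexp).stronglyMeasurable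
  have hexpnorm : ∀ (x : ℝ), ‖Complex.exp ((x : ℂ) * Complex.I)‖ = 1 := fun x => by
    rw [Complex.norm_exp_ofReal_mul_I]
  have hexp_int : ∀ v : ℝ, Integrable (fun ω => Complex.exp ((↑(v * W ω) : ℂ) * Complex.I)) μ := by
    intro v
    refine (integrable_const (1:ℝ)).mono' ?_ (ae_of_all _ fun ω => by rw [hexpnorm])
    exact (((Complex.measurable_ofReal.comp
      (measurable_const.mul hW)).mul measurable_const).cexp).aestronglyMeasurable
  have hφle1 : ∀ v, ‖charFn μ W v‖ ≤ 1 := by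
    intro v
    unfold charFn
    refine le_trans (norm_integral_le_of_norm_le (integrable_const (1:ℝ))
      (ae_of_all _ fun ω => by rw [hexpnorm])) ?_
    simp
  have hre : ∀ v : ℝ, ∫ ω, Real.cos (v * W ω) ∂μ = (charFn μ W v).re := by
    intro v
    unfold charFn
    rw [← RCLike.re_to_complex, ← integral_re (hexp_int v)]
    congr 1
    funext ω
    simp only [RCLike.re_to_complex]
    rw [Complex.exp_ofReal_mul_I_re]
  -- upper bound on the outer integral
  have hint2 : Integrable (fun v => (a - v) * ‖charFn μ W v‖) ν := by
    refine (integrable_const a).mono'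
      (((stronglyMeasurable_const.sub stronglyMeasurable_id).mul
        hφmeas.norm).aestronglyMeasurable) ?_
    filter_upwards [ae_restrict_mem measurableSet_Ioc] with v hv
    have h1 : |a - v| ≤ a := by rw [abs_of_nonneg (by linarith [hv.2])]; linarith [hv.1]
    calc ‖(a - v) * ‖charFn μ W v‖‖ = |a - v| * |‖charFn μ W v‖| := abs_mul _ _
      _ ≤ a * 1 := mul_le_mul h1 (by rw [abs_of_nonneg (norm_nonneg _)]; exact hφle1 v)
          (abs_nonneg _) ha.le
      _ = a := mul_one a
  have houter : ∫ v, (∫ ω, (a - v) * Real.cos (v * W ω) ∂μ) ∂ν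
      ≤ ∫ v, (a - v) * ‖charFn μ W v‖ ∂ν := by
    refine setIntegral_mono_on (hfint.integral_prod_right) hint2 measurableSet_Ioc ?_
    intro v hv
    rw [integral_const_mul, hre v]
    have h2 : (charFn μ W v).re ≤ ‖charFn μ W v‖ := by
      exact Complex.re_le_norm _
    exact mul_le_mul_of_nonneg_left h2 (by linarith [hv.2])
  -- bound by M₁
  have hJ : ∫ v, (a - v) * ‖charFn μ W v‖ ∂ν ≤ a * M₁ := by
    have hnn : 0 ≤ᵐ[ν] fun v => (a - v) * ‖charFn μ W v‖ := by
      filter_upwards [ae_restrict_mem measurableSet_Ioc] with v hv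
      exact mul_nonneg (by linarith [hv.2]) (norm_nonneg _)
    have hmφ : Measurable fun v => ENNReal.ofReal ‖charFn μ W v‖ :=
      hφmeas.norm.measurable.ennreal_ofReal
    have hOf : ENNReal.ofReal (∫ v, (a - v) * ‖charFn μ W v‖ ∂ν)
        = ∫⁻ v, ENNReal.ofReal ((a - v) * ‖charFn μ W v‖) ∂ν :=
      ofReal_integral_eq_lintegral_ofReal hint2 hnn
    have h1 : ∫⁻ v, ENNReal.ofReal ((a - v) * ‖charFn μ W v‖) ∂ν
        ≤ ∫⁻ v, ENNReal.ofReal a * ENNReal.ofReal ‖charFn μ W v‖ ∂ν := by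
      rw [hν_def]
      refine setLIntegral_mono (hmφ.const_mul _) ?_
      intro v hv
      rw [← ENNReal.ofReal_mul ha.le]
      exact ENNReal.ofReal_le_ofReal
        (mul_le_mul_of_nonneg_right (by linarith [hv.1]) (norm_nonneg _))
    have h2 : ∫⁻ v, ENNReal.ofReal a * ENNReal.ofReal ‖charFn μ W v‖ ∂ν
        = ENNReal.ofReal a * ∫⁻ v, ENNReal.ofReal ‖charFn μ W v‖ ∂ν :=
      lintegral_const_mul _ hmφ
    have h3 : ∫⁻ v, ENNReal.ofReal ‖charFn μ W v‖ ∂ν ≤ ENNReal.ofReal M₁ := by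
      refine le_trans ?_ hint
      rw [hν_def]
      exact lintegral_mono_set Ioc_subset_Ioi_self
    have h5 : ENNReal.ofReal (∫ v, (a - v) * ‖charFn μ W v‖ ∂ν)
        ≤ ENNReal.ofReal (a * M₁) := by
      rw [hOf, ENNReal.ofReal_mul ha.le]
      exact le_trans h1 (le_trans h2.le (mul_le_mul_right h3 _))
    exact (ENNReal.ofReal_le_ofReal_iff (mul_nonneg ha.le hM₁)).mp h5
  have hfinal : a ^ 2 / 4 * (μ S).toReal ≤ a * M₁ := by
    calc a ^ 2 / 4 * (μ S).toReal ≤ ∫ ω, G (W ω) ∂μ := hlow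
      _ = _ := hswap
      _ ≤ _ := houter
      _ ≤ a * M₁ := hJ
  have hT := ENNReal.toReal_nonneg (a := μ S)
  have h2 := mul_le_mul_of_nonneg_right hfinal (by positivity : (0:ℝ) ≤ b ^ 2)
  have e1 : a ^ 2 * b ^ 2 = 1 := by rw [← mul_pow, hab]; norm_num
  have e2 : a * b ^ 2 = b := by rw [pow_two, ← mul_assoc, hab, one_mul]
  have e3 : a ^ 2 / 4 * (μ S).toReal * b ^ 2 = (μ S).toReal / 4 := by
    rw [show a ^ 2 / 4 * (μ S).toReal * b ^ 2 = a ^ 2 * b ^ 2 * ((μ S).toReal / 4) by ring, e1,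
      one_mul]
  have e4 : a * M₁ * b ^ 2 = M₁ * b := by
    rw [show a * M₁ * b ^ 2 = M₁ * (a * b ^ 2) by ring, e2]
  linarith [h2, e3.symm.trans_le (e4 ▸ h2)]

theorem stmt0 {Ω : Type*} [MeasurableSpace Ω] (μ : Measure Ω) [IsProbabilityMeasure μ]
    (Y : ℝ → Ω → ℝ) (t : ℝ) (ε₀ h M : ℝ) (hε₀ : 0 < ε₀) (hh : 0 < h)
    (hmeas : ∀ s, Measurable (Y s))
    (hsym : ∀ r : ℝ, Measure.map (fun ω => Y (t + r) ω - Y t ω) μ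
      = Measure.map (fun ω => -(Y (t + r) ω - Y t ω)) μ)
    (hbound : ∀ r ∈ Ioo (0:ℝ) ε₀,
      ∫⁻ v in Ioi (0:ℝ),
        ENNReal.ofReal ‖charFn μ (fun ω => (Y (t + r) ω - Y t ω) / r ^ h) v‖
        ≤ ENNReal.ofReal M) :
    ∃ K > 0, ∀ x > (0:ℝ), ∀ r ∈ Ioo (0:ℝ) ε₀,
      μ {ω | |Y (t + r) ω - Y t ω| < x} ≤ ENNReal.ofReal (K * x / r ^ h) := by
  have hM0 : (0:ℝ) ≤ max M 0 := le_max_right M 0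
  refine ⟨4 * max M 0 + 1, by linarith, ?_⟩
  intro x hx r hr
  have hrh : (0:ℝ) < r ^ h := Real.rpow_pos_of_pos hr.1 h
  set W : Ω → ℝ := fun ω => (Y (t + r) ω - Y t ω) / r ^ h with hW_def
  have hWmeas : Measurable W := ((hmeas (t + r)).sub (hmeas t)).div_const _
  have hb : 0 < x / r ^ h := div_pos hx hrh
  have hseteq : {ω | |Y (t + r) ω - Y t ω| < x} = {ω | |W ω| < x / r ^ h} := by
    ext ω
    simp only [mem_setOf_eq, hW_def]
    rw [abs_div, abs_of_pos hrh, div_lt_div_iff_of_pos_right hrh]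
  have hkey := key μ W hWmeas (max M 0) (x / r ^ h) (le_max_right M 0) hb
    (le_trans (hbound r hr) (ENNReal.ofReal_le_ofReal (le_max_left M 0)))
  rw [hseteq, ENNReal.le_ofReal_iff_toReal_le (measure_ne_top μ _) (by positivity)]
  calc (μ {ω | |W ω| < x / r ^ h}).toReal ≤ 4 * max M 0 * (x / r ^ h) := hkey
    _ ≤ (4 * max M 0 + 1) * x / r ^ h := by
        rw [mul_div_assoc]
        nlinarith [hb]
end

section
/- Let Y be a stochastic process on ℝ, t ∈ ℝ, h > 0, and suppose there exist K > 0, γ > h and ε₀ > 0 such that for all r ∈ (0, ε₀) and all x > 0, P(|Y(t+r) − Y(t)| < x) ≤ K·x/r^h. Then almost surely limsup_{r→0+} |Y(t+r) − Y(t)|/r^γ = +∞; in particular the pointwise Hölder exponent of Y at t, defined as H_t = sup{β : lim_{r→0} |Y(t+r)−Y(t)|/|r|^β = 0}, satisfies H_t ≤ h almost surely. -/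
open MeasureTheory Set Filter
open scoped ENNReal

lemma aux13 {Ω : Type*} [MeasurableSpace Ω] (μ : Measure Ω) [IsProbabilityMeasure μ]
    (Y : ℝ → Ω → ℝ) (t h K ε₀ : ℝ)
    (hh : 0 < h) (hK : 0 < K) (hε₀ : 0 < ε₀)
    (hbound : ∀ r ∈ Ioo (0:ℝ) ε₀, ∀ x > (0:ℝ),
      μ {ω | |Y (t + r) ω - Y t ω| < x} ≤ ENNReal.ofReal (K * x / r ^ h))
    (c : ℝ) (hc : h < c) :
    ∀ᵐ ω ∂μ,
      Filter.limsup (fun r => ENNReal.ofReal (|Y (t + r) ω - Y t ω| / r ^ c))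
        (nhdsWithin 0 (Ioi (0:ℝ))) = ⊤ := by
  set η : ℝ := 2 / (c - h) with hη
  have hch : (0:ℝ) < c - h := by linarith
  have hηpos : 0 < η := by positivity
  set r : ℕ → ℝ := fun n => ((n:ℝ) + 1) ^ (-η) with hr
  have hrpos : ∀ n, 0 < r n := fun n => Real.rpow_pos_of_pos (by positivity) _
  have hrtend : Tendsto r atTop (nhds 0) := by
    have := tendsto_rpow_neg_atTop hηpos
    exact this.comp (tendsto_atTop_add_const_right atTop 1 tendsto_natCast_atTop_atTop)
  have hrtend' : Tendsto r atTop (nhdsWithin 0 (Ioi (0:ℝ))) :=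
    tendsto_nhdsWithin_of_tendsto_nhds_of_eventually_within _ hrtend
      (Eventually.of_forall fun n => hrpos n)
  have hrsmall : ∀ᶠ n in atTop, r n < ε₀ :=
    hrtend.eventually (gt_mem_nhds hε₀) |>.mono (fun n hn => hn)
  -- key exponent computation
  have hrexp : ∀ n, r n ^ (c - h) = ((n:ℝ) + 1) ^ (-2 : ℝ) := by
    intro n
    have h1 : r n = ((n:ℝ) + 1) ^ (-η) := rfl
    rw [h1, ← Real.rpow_mul (by positivity)]
    congr 1
    rw [hη]
    field_simp
  -- the bad sets
  set s : ℕ → ℕ → Set Ω := fun m n =>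
    if r n < ε₀ then {ω | |Y (t + r n) ω - Y t ω| < ((m:ℝ) + 1) * r n ^ c} else ∅ with hs
  have hsmeas : ∀ m n, μ (s m n) ≤ ENNReal.ofReal (K * ((m:ℝ)+1) * ((n:ℝ)+1) ^ (-2:ℝ)) := by
    intro m n
    rw [hs]
    simp only
    split_ifs with hlt
    · have hx : (0:ℝ) < ((m:ℝ) + 1) * r n ^ c := by
        have := Real.rpow_pos_of_pos (hrpos n) c
        positivity
      refine (hbound (r n) ⟨hrpos n, hlt⟩ _ hx).trans_eq ?_
      congr 1
      have : r n ^ c / r n ^ h = r n ^ (c - h) := by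
        rw [← Real.rpow_sub (hrpos n)]
      rw [← hrexp n, ← this]
      ring
    · simp
  have hsum : ∀ m : ℕ, (∑' n, μ (s m n)) ≠ ⊤ := by
    intro m
    have hsummable : Summable (fun n : ℕ => K * ((m:ℝ)+1) * ((n:ℝ)+1) ^ (-2:ℝ)) := by
      apply Summable.mul_left
      have h1 : Summable (fun n : ℕ => ((n:ℝ)) ^ (-2:ℝ)) :=
        Real.summable_nat_rpow.mpr (by norm_num)
      have h2 := (summable_nat_add_iff 1).mpr h1
      refine h2.congr fun n => ?_
      push_cast
      ring_nf
    have hle : (∑' n, μ (s m n)) ≤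
        ∑' (n:ℕ), ENNReal.ofReal (K * ((m:ℝ)+1) * ((n:ℝ)+1) ^ (-2:ℝ)) :=
      ENNReal.tsum_le_tsum (hsmeas m)
    refine ne_of_lt (lt_of_le_of_lt hle ?_)
    rw [← ENNReal.ofReal_tsum_of_nonneg (fun n => by positivity) hsummable]
    exact ENNReal.ofReal_lt_top
  have hae : ∀ᵐ ω ∂μ, ∀ m : ℕ, ∀ᶠ n in atTop, ω ∉ s m n := by
    rw [ae_all_iff]
    intro m
    exact ae_eventually_notMem (hsum m)
  filter_upwards [hae] with ω hω
  rw [eq_top_iff, ← ENNReal.iSup_natCast]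
  refine iSup_le fun m => ?_
  refine le_limsup_of_frequently_le ?_ (isBoundedUnder_of ⟨⊤, fun x => le_top⟩)
  have hev : ∀ᶠ n in atTop, (m : ℝ≥0∞) ≤
      ENNReal.ofReal (|Y (t + r n) ω - Y t ω| / r n ^ c) := by
    filter_upwards [hω m, hrsmall] with n hn hlt
    rw [hs] at hn
    simp only [if_pos hlt, mem_setOf_eq, not_lt] at hn
    have hrc : (0:ℝ) < r n ^ c := Real.rpow_pos_of_pos (hrpos n) c
    have : ((m:ℝ)+1) ≤ |Y (t + r n) ω - Y t ω| / r n ^ c := by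
      rw [le_div_iff₀ hrc]; linarith
    calc (m : ℝ≥0∞) = ENNReal.ofReal (m:ℝ) := (ENNReal.ofReal_natCast m).symm
      _ ≤ _ := ENNReal.ofReal_le_ofReal (by linarith)
  exact hrtend'.frequently hev.frequently


theorem stmt13 {Ω : Type*} [MeasurableSpace Ω] (μ : Measure Ω) [IsProbabilityMeasure μ]
    (Y : ℝ → Ω → ℝ) (t h γ K ε₀ : ℝ)
    (hh : 0 < h) (hγ : h < γ) (hK : 0 < K) (hε₀ : 0 < ε₀)
    (hmeas : ∀ s, Measurable (Y s))
    (hbound : ∀ r ∈ Ioo (0:ℝ) ε₀, ∀ x > (0:ℝ),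
      μ {ω | |Y (t + r) ω - Y t ω| < x} ≤ ENNReal.ofReal (K * x / r ^ h)) :
    ∀ᵐ ω ∂μ,
      (Filter.limsup (fun r => ENNReal.ofReal (|Y (t + r) ω - Y t ω| / r ^ γ))
        (nhdsWithin 0 (Ioi (0:ℝ))) = ⊤) ∧
      sSup {β : ℝ | Filter.Tendsto (fun r : ℝ => |Y (t + r) ω - Y t ω| / |r| ^ β)
        (nhdsWithin 0 ({0}ᶜ : Set ℝ)) (nhds 0)} ≤ h := by
  have hγae := aux13 μ Y t h K ε₀ hh hK hε₀ hbound γ hγ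
  have hkae : ∀ᵐ ω ∂μ, ∀ k : ℕ,
      Filter.limsup (fun r => ENNReal.ofReal (|Y (t + r) ω - Y t ω| / r ^ (h + 1/((k:ℝ)+1))))
        (nhdsWithin 0 (Ioi (0:ℝ))) = ⊤ := by
    rw [ae_all_iff]
    intro k
    exact aux13 μ Y t h K ε₀ hh hK hε₀ hbound _ (lt_add_of_pos_right h (by positivity))
  filter_upwards [hγae, hkae] with ω hγω hkω
  refine ⟨hγω, ?_⟩
  refine Real.sSup_le (fun β hβ => ?_) hh.le
  by_contra hβh
  push_neg at hβh
  obtain ⟨k, hk⟩ := exists_nat_one_div_lt (show (0:ℝ) < β - h by linarith)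
  set c : ℝ := h + 1/((k:ℝ)+1) with hcdef
  have hcβ : c < β := by rw [hcdef]; linarith
  -- tendsto with exponent c on the punctured neighborhood
  have htc : Tendsto (fun r : ℝ => |Y (t + r) ω - Y t ω| / |r| ^ c)
      (nhdsWithin 0 ({0}ᶜ : Set ℝ)) (nhds 0) := by
    have h2 : Tendsto (fun r : ℝ => |r| ^ (β - c)) (nhdsWithin 0 ({0}ᶜ : Set ℝ)) (nhds 0) := by
      have hcont : ContinuousAt (fun x : ℝ => x ^ (β - c)) 0 :=
        Real.continuousAt_rpow_const 0 (β - c) (Or.inr (by linarith))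
      have habs : Tendsto (fun r : ℝ => |r|) (nhdsWithin 0 ({0}ᶜ : Set ℝ)) (nhds 0) := by
        have := (continuous_abs.tendsto (0:ℝ)).mono_left
          (nhdsWithin_le_nhds (s := ({0}ᶜ : Set ℝ)))
        simpa using this
      have := (hcont.tendsto.comp habs)
      simpa [Function.comp_def, Real.rpow_natCast, Real.zero_rpow (show β - c ≠ 0 by linarith)] using this
    have hmul := (hβ : Tendsto _ _ _).mul h2
    rw [mul_zero] at hmul
    refine hmul.congr' ?_
    filter_upwards [self_mem_nhdsWithin] with r (hr : r ≠ 0)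
    have habs : (0:ℝ) < |r| := abs_pos.mpr hr
    rw [div_mul_eq_mul_div, div_eq_div_iff (by positivity) (by positivity)]
    rw [mul_assoc, ← Real.rpow_add habs]
    ring_nf
  -- restrict to right neighborhood and pass to ENNReal
  have htc' : Tendsto (fun r : ℝ => ENNReal.ofReal (|Y (t + r) ω - Y t ω| / r ^ c))
      (nhdsWithin 0 (Ioi (0:ℝ))) (nhds 0) := by
    have hmono : nhdsWithin (0:ℝ) (Ioi 0) ≤ nhdsWithin 0 ({0}ᶜ : Set ℝ) :=
      nhdsWithin_mono 0 (fun x hx => ne_of_gt hx)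
    have h1 := (htc.mono_left hmono)
    have h2 : Tendsto (fun r : ℝ => |Y (t + r) ω - Y t ω| / r ^ c)
        (nhdsWithin 0 (Ioi (0:ℝ))) (nhds 0) := by
      refine h1.congr' ?_
      filter_upwards [self_mem_nhdsWithin] with r (hr : r ∈ Ioi (0:ℝ))
      rw [abs_of_pos (show (0:ℝ) < r from hr)]
    simpa using ENNReal.tendsto_ofReal h2
  have := htc'.limsup_eq
  rw [hkω k] at this
  simp at this
end
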